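/- For positive reals λ_BS, λ_e and α > 0, the integral ∫₀^∞ [1 - exp(-(λ_BS/λ_e)·2^{-2t/α})] dt equals (α/(2 ln 2))·[γ + ln(λ_BS/λ_e) + E₁(λ_BS/λ_e)], where E₁ is the exponential integral and γ the Euler–Mascheroni constant. -/

import Mathlib

open MeasureTheory Real Set Filter

/-- The exponential integral `E₁(x) = ∫ₓ^∞ e^{-t}/t dt`. -/
noncomputable def expIntegralE1 (x : ℝ) : ℝ := ∫ t in Set.Ioi x, Real.exp (-t) / t

lemma intA : IntegrableOn (fun u : ℝ => Real.exp (-u) * Real.log u) (Ioi 0) := by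
  have hmeas : AEStronglyMeasurable (fun u : ℝ => Real.exp (-u) * Real.log u) volume :=
    ((Real.continuous_exp.comp continuous_neg).measurable.mul Real.measurable_log).aestronglyMeasurable
  have h1 : IntegrableOn (fun u : ℝ => Real.exp (-u) * Real.log u) (Ioc 0 1) := by
    have hrp : IntegrableOn (fun u : ℝ => 2 * u ^ (-(1/2) : ℝ)) (Ioc 0 1) := by
      have h := (intervalIntegral.intervalIntegrable_rpow' (a := 0) (b := 1)
        (by norm_num : (-1:ℝ) < -(1/2)))
      exact ((intervalIntegrable_iff_integrableOn_Ioc_of_le (by norm_num)).mp h).const_mul 2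
    refine hrp.integrable.mono' hmeas.restrict ?_
    refine (ae_restrict_iff' measurableSet_Ioc).2 (ae_of_all _ fun u hu => ?_)
    have hu0 : 0 < u := hu.1
    have h1 : Real.exp (-u) ≤ 1 := Real.exp_le_one_iff.2 (by linarith)
    have hlog : |Real.log u| ≤ 2 * u ^ (-(1/2) : ℝ) := by
      have hneg : Real.log u ≤ 0 := Real.log_nonpos hu0.le hu.2
      rw [abs_of_nonpos hneg]
      have h2 : Real.log (u ^ (-(1/2) : ℝ)) ≤ u ^ (-(1/2) : ℝ) - 1 :=
        Real.log_le_sub_one_of_pos (Real.rpow_pos_of_pos hu0 _)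
      rw [Real.log_rpow hu0] at h2
      nlinarith [Real.rpow_pos_of_pos hu0 (-(1/2) : ℝ)]
    calc ‖Real.exp (-u) * Real.log u‖ = Real.exp (-u) * |Real.log u| := by
          rw [norm_mul, Real.norm_eq_abs, Real.norm_eq_abs, abs_of_pos (Real.exp_pos _)]
      _ ≤ 1 * |Real.log u| := by
          exact mul_le_mul_of_nonneg_right h1 (abs_nonneg _)
      _ ≤ 2 * u ^ (-(1/2) : ℝ) := by rw [one_mul]; exact hlog
  have h2 : IntegrableOn (fun u : ℝ => Real.exp (-u) * Real.log u) (Ioi 1) := by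
    have hG : IntegrableOn (fun x : ℝ => Real.exp (-x) * x ^ ((2:ℝ) - 1)) (Ioi 0) :=
      Real.GammaIntegral_convergent (by norm_num)
    have hG' : IntegrableOn (fun x : ℝ => Real.exp (-x) * x) (Ioi 1) := by
      have := hG.mono_set (Ioi_subset_Ioi zero_le_one)
      refine this.congr_fun (fun x hx => ?_) measurableSet_Ioi
      simp only [show ((2:ℝ) - 1) = 1 by norm_num, Real.rpow_one]
    refine hG'.integrable.mono' hmeas.restrict ?_
    refine (ae_restrict_iff' measurableSet_Ioi).2 (ae_of_all _ fun u hu => ?_)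
    have hu1 : (1:ℝ) < u := hu
    have hlog : |Real.log u| ≤ u := by
      rw [abs_of_nonneg (Real.log_nonneg hu1.le)]
      linarith [Real.log_le_sub_one_of_pos (by linarith : (0:ℝ) < u)]
    calc ‖Real.exp (-u) * Real.log u‖ = Real.exp (-u) * |Real.log u| := by
          rw [norm_mul, Real.norm_eq_abs, Real.norm_eq_abs, abs_of_pos (Real.exp_pos _)]
      _ ≤ Real.exp (-u) * u := mul_le_mul_of_nonneg_left hlog (Real.exp_pos _).le
  rw [← Ioc_union_Ioi_eq_Ioi (zero_le_one)]
  exact h1.union h2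

lemma gammaInt : ∫ u in Ioi (0:ℝ), Real.exp (-u) * Real.log u = -Real.eulerMascheroniConstant := by
  set D : ℂ := ∫ t : ℝ in Ioi 0, (t:ℂ) ^ ((1:ℂ) - 1) * (Real.log t * Real.exp (-t)) with hD
  have hC : HasDerivAt Complex.Gamma D 1 := by
    have h1 : HasDerivAt Complex.GammaIntegral D 1 :=
      Complex.hasDerivAt_GammaIntegral (by norm_num)
    have heq : Complex.Gamma =ᶠ[nhds (1:ℂ)] Complex.GammaIntegral := by
      filter_upwards [(isOpen_lt continuous_const Complex.continuous_re).mem_nhds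
        (by norm_num : (0:ℝ) < (1:ℂ).re)] with s hs
      exact Complex.Gamma_eq_integral hs
    exact (heq.hasDerivAt_iff).2 h1
  have hR : HasDerivAt Real.Gamma D.re 1 := by
    have := hC.real_of_complex
    refine this.congr_of_eventuallyEq (Filter.Eventually.of_forall fun x => ?_)
    simp [Complex.Gamma_ofReal]
  have huniq : D.re = -Real.eulerMascheroniConstant :=
    hR.unique Real.hasDerivAt_Gamma_one
  have h1 : D = ∫ t in Ioi (0:ℝ), ((Real.exp (-t) * Real.log t : ℝ) : ℂ) := by
    rw [hD]
    refine setIntegral_congr_fun measurableSet_Ioi fun t ht => ?_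
    rw [sub_self, Complex.cpow_zero, one_mul, Complex.ofReal_mul, mul_comm]
  have hDre : D = ((∫ u in Ioi (0:ℝ), Real.exp (-u) * Real.log u : ℝ) : ℂ) :=
    h1.trans integral_ofReal
  rw [← huniq, hDre, Complex.ofReal_re]

lemma intB {c : ℝ} (hc : 0 < c) :
    IntegrableOn (fun u : ℝ => (1 - Real.exp (-u)) / u) (Ioc 0 c) := by
  have hmeas : AEStronglyMeasurable (fun u : ℝ => (1 - Real.exp (-u)) / u) volume :=
    (((measurable_const.sub ((Real.continuous_exp.comp continuous_neg).measurable)).div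
      measurable_id)).aestronglyMeasurable
  have hg : IntegrableOn (fun _ : ℝ => (1:ℝ)) (Ioc 0 c) :=
    integrableOn_const measure_Ioc_lt_top.ne
  refine hg.integrable.mono' hmeas.restrict ?_
  refine (ae_restrict_iff' measurableSet_Ioc).2 (ae_of_all _ fun u hu => ?_)
  have hu0 : 0 < u := hu.1
  have h1 : Real.exp (-u) ≤ 1 := Real.exp_le_one_iff.2 (by linarith)
  have h2 : 1 - Real.exp (-u) ≤ u := by linarith [Real.add_one_le_exp (-u)]
  rw [Real.norm_eq_abs, abs_div, abs_of_pos hu0, abs_of_nonneg (by linarith)]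
  rw [div_le_one hu0]
  exact h2

lemma intC {c : ℝ} (hc : 0 < c) :
    IntegrableOn (fun u : ℝ => Real.exp (-u) * u⁻¹) (Ioi c) := by
  have hmeas : AEStronglyMeasurable (fun u : ℝ => Real.exp (-u) * u⁻¹) volume :=
    ((Real.continuous_exp.comp continuous_neg).measurable.mul measurable_inv).aestronglyMeasurable
  have hg : IntegrableOn (fun u : ℝ => c⁻¹ * Real.exp (-u)) (Ioi c) := by
    have h0 := exp_neg_integrableOn_Ioi c (zero_lt_one (α := ℝ))
    have h2 : IntegrableOn (fun x : ℝ => c⁻¹ * Real.exp (-1 * x)) (Ioi c) := h0.const_mul c⁻¹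
    refine h2.congr_fun (fun x _ => by simp only [neg_one_mul]) measurableSet_Ioi
  refine hg.integrable.mono' hmeas.restrict ?_
  refine (ae_restrict_iff' measurableSet_Ioi).2 (ae_of_all _ fun u hu => ?_)
  have hu0 : c < u := hu
  rw [Real.norm_eq_abs, abs_mul, abs_of_pos (Real.exp_pos _),
    abs_of_pos (inv_pos.2 (hc.trans hu0)), mul_comm]
  exact mul_le_mul_of_nonneg_right (inv_anti₀ hc hu0.le) (Real.exp_pos _).le

lemma keyJ {c : ℝ} (hc : 0 < c) :
    ∫ u in Ioc (0:ℝ) c, (1 - Real.exp (-u)) / u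
      = Real.eulerMascheroniConstant + Real.log c + expIntegralE1 c := by
  set φ : ℝ → ℝ := fun u => Real.exp (-u) * Real.log u + (1 - Real.exp (-u)) / u with hφ
  set g : ℝ → ℝ := fun u => if u ≤ 0 then 0 else (1 - Real.exp (-u)) * Real.log u with hgdef
  have hfderiv : ∀ x : ℝ, 0 < x →
      HasDerivAt (fun u => (1 - Real.exp (-u)) * Real.log u) (φ x) x := by
    intro x hx
    have h1 : HasDerivAt (fun u : ℝ => 1 - Real.exp (-u)) (Real.exp (-x)) x := by
      have := ((Real.hasDerivAt_exp (-x)).comp x (hasDerivAt_neg x)).const_sub 1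
      simpa using this
    have h2 : HasDerivAt Real.log x⁻¹ x := Real.hasDerivAt_log hx.ne'
    have := h1.mul h2
    exact this.congr_deriv (by simp only [hφ]; ring)
  have hg_eq : ∀ x : ℝ, 0 < x → g x = (1 - Real.exp (-x)) * Real.log x := by
    intro x hx; simp only [hgdef, if_neg (not_le.2 hx)]
  have hgx_ev : ∀ x : ℝ, 0 < x →
      g =ᶠ[nhds x] (fun u => (1 - Real.exp (-u)) * Real.log u) := by
    intro x hx
    filter_upwards [(isOpen_lt continuous_const continuous_id).mem_nhds hx] with u hu
    exact hg_eq u hu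
  have hbound : ∀ u : ℝ, ‖g u‖ ≤ |Real.log u * u| := by
    intro u
    rcases le_or_gt u 0 with h | h
    · simp [hgdef, if_pos h]; positivity
    · rw [hg_eq u h, Real.norm_eq_abs, abs_mul, abs_mul, mul_comm |Real.log u| _]
      have h1 : Real.exp (-u) ≤ 1 := Real.exp_le_one_iff.2 (by linarith)
      have h2 : 1 - Real.exp (-u) ≤ u := by linarith [Real.add_one_le_exp (-u)]
      have : |1 - Real.exp (-u)| ≤ |u| := by
        rw [abs_of_nonneg (by linarith), abs_of_pos h]; exact h2
      exact mul_le_mul_of_nonneg_right this (abs_nonneg _)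
  have hcont : ContinuousOn g (Icc 0 c) := by
    intro x hx
    rcases hx.1.eq_or_lt with rfl | hx0
    · have hb : Tendsto (fun u : ℝ => |Real.log u * u|) (nhdsWithin 0 (Icc 0 c)) (nhds 0) := by
        have h1 : Tendsto (fun u : ℝ => |Real.log u * u|) (nhdsWithin 0 (Ioi 0)) (nhds 0) := by
          have := (tendsto_log_mul_rpow_nhdsGT_zero (one_pos)).abs
          rw [abs_zero] at this
          refine this.congr fun u => by rw [Real.rpow_one]
        have h2 : Tendsto (fun u : ℝ => |Real.log u * u|) (nhdsWithin 0 {0}) (nhds 0) := by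
          rw [nhdsWithin_singleton]
          have h3 := tendsto_pure_nhds (fun u : ℝ => |Real.log u * u|) 0
          simpa using h3
        have hmono : nhdsWithin (0:ℝ) (Icc 0 c) ≤ nhdsWithin 0 (Ici 0) :=
          nhdsWithin_mono _ Icc_subset_Ici_self
        have hIci : (Ici (0:ℝ)) = {0} ∪ Ioi 0 := by
          ext y; simp [le_iff_lt_or_eq, eq_comm, or_comm]
        rw [hIci, nhdsWithin_union] at hmono
        exact (tendsto_sup.2 ⟨h2, h1⟩).mono_left hmono
      have h0 : g 0 = 0 := by simp [hgdef]
      unfold ContinuousWithinAt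
      rw [h0]
      exact squeeze_zero_norm' (Filter.Eventually.of_forall hbound) hb
    · exact (((hfderiv x hx0).continuousAt).congr (hgx_ev x hx0).symm).continuousWithinAt
  have hder : ∀ x ∈ Ioo (0:ℝ) c, HasDerivWithinAt g (φ x) (Ioi x) x := fun x hx =>
    (((hfderiv x hx.1).congr_of_eventuallyEq (hgx_ev x hx.1)).hasDerivWithinAt)
  have hintφ : IntervalIntegrable φ volume 0 c := by
    rw [intervalIntegrable_iff_integrableOn_Ioc_of_le hc.le]
    exact (intA.mono_set fun x hx => hx.1).add (intB hc)
  have hFTC := intervalIntegral.integral_eq_sub_of_hasDeriv_right_of_le hc.le hcont hder hintφ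
  rw [intervalIntegral.integral_of_le hc.le] at hFTC
  rw [MeasureTheory.integral_Ioc_eq_integral_Ioo] at hFTC
  rw [← MeasureTheory.integral_Ioc_eq_integral_Ioo] at hFTC
  have hgc : g c = (1 - Real.exp (-c)) * Real.log c := hg_eq c hc
  have hg0 : g 0 = 0 := by simp [hgdef]
  rw [hgc, hg0, sub_zero] at hFTC
  have hsplit : ∫ u in Ioc (0:ℝ) c, φ u
      = (∫ u in Ioc (0:ℝ) c, Real.exp (-u) * Real.log u)
        + ∫ u in Ioc (0:ℝ) c, (1 - Real.exp (-u)) / u :=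
    MeasureTheory.integral_add (intA.mono_set fun x hx => hx.1) (intB hc)
  rw [hsplit] at hFTC
  -- IBP on (c, ∞)
  have hderiv2 : ∀ x ∈ Ioi c, HasDerivAt (fun u : ℝ => Real.exp (-u) * Real.log u)
      (Real.exp (-x) * x⁻¹ - Real.exp (-x) * Real.log x) x := by
    intro x hx
    have hx0 : 0 < x := hc.trans hx
    have h1 : HasDerivAt (fun u : ℝ => Real.exp (-u)) (-Real.exp (-x)) x := by
      have := (Real.hasDerivAt_exp (-x)).comp x (hasDerivAt_neg x)
      exact this.congr_deriv (by ring)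
    have := h1.mul (Real.hasDerivAt_log hx0.ne')
    exact this.congr_deriv (by ring)
  have hcont2 : ContinuousWithinAt (fun u : ℝ => Real.exp (-u) * Real.log u) (Ici c) c :=
    (((Real.continuous_exp.comp continuous_neg).continuousAt).mul
      (Real.continuousAt_log hc.ne')).continuousWithinAt
  have hf'int : IntegrableOn (fun x : ℝ =>
      Real.exp (-x) * x⁻¹ - Real.exp (-x) * Real.log x) (Ioi c) :=
    (intC hc).sub (intA.mono_set (Ioi_subset_Ioi hc.le))
  have htend : Tendsto (fun u : ℝ => Real.exp (-u) * Real.log u) atTop (nhds 0) := by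
    have hb := Real.tendsto_pow_mul_exp_neg_atTop_nhds_zero 1
    refine squeeze_zero_norm' ?_ hb
    filter_upwards [eventually_ge_atTop (1:ℝ)] with x hx
    have hlog : |Real.log x| ≤ x := by
      rw [abs_of_nonneg (Real.log_nonneg hx)]
      linarith [Real.log_le_sub_one_of_pos (by linarith : (0:ℝ) < x)]
    rw [norm_mul, Real.norm_eq_abs, Real.norm_eq_abs, abs_of_pos (Real.exp_pos _), pow_one,
      mul_comm x _]
    exact mul_le_mul_of_nonneg_left hlog (Real.exp_pos _).le
  have hIBP2 := integral_Ioi_of_hasDerivAt_of_tendsto hcont2 hderiv2 hf'int htend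
  have hsplit2 : ∫ x in Ioi c, (Real.exp (-x) * x⁻¹ - Real.exp (-x) * Real.log x)
      = (∫ x in Ioi c, Real.exp (-x) * x⁻¹) - ∫ x in Ioi c, Real.exp (-x) * Real.log x :=
    MeasureTheory.integral_sub (intC hc) (intA.mono_set (Ioi_subset_Ioi hc.le))
  rw [hsplit2] at hIBP2
  have hE1 : (∫ x in Ioi c, Real.exp (-x) * x⁻¹) = expIntegralE1 c := by
    unfold expIntegralE1
    exact setIntegral_congr_fun measurableSet_Ioi fun x _ => (div_eq_mul_inv _ _).symm
  rw [hE1] at hIBP2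
  -- combine
  have hunion : (∫ u in Ioc (0:ℝ) c, Real.exp (-u) * Real.log u)
      + ∫ u in Ioi c, Real.exp (-u) * Real.log u = -Real.eulerMascheroniConstant := by
    rw [← gammaInt, ← Ioc_union_Ioi_eq_Ioi hc.le]
    exact (MeasureTheory.setIntegral_union (Set.Ioc_disjoint_Ioi le_rfl) measurableSet_Ioi
      (intA.mono_set fun x hx => hx.1) (intA.mono_set (Ioi_subset_Ioi hc.le))).symm
  have hring : (1 - Real.exp (-c)) * Real.log c
      = Real.log c - Real.exp (-c) * Real.log c := by ring
  linarith [hFTC, hIBP2, hunion]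

theorem stmt_3 (lBS le α : ℝ) (hBS : 0 < lBS) (he : 0 < le) (hα : 0 < α) :
    ∫ t in Set.Ioi (0:ℝ), (1 - Real.exp (-(lBS / le) * (2:ℝ) ^ (-(2 * t / α))))
    = α / (2 * Real.log 2) *
        (Real.eulerMascheroniConstant + Real.log (lBS / le) + expIntegralE1 (lBS / le)) := by
  set c : ℝ := lBS / le with hcdef
  have hc : 0 < c := div_pos hBS he
  set k : ℝ := 2 * Real.log 2 / α with hkdef
  have hk : 0 < k := div_pos (by positivity) hα
  set f : ℝ → ℝ := fun t => c * Real.exp (-(k * t)) with hfdef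
  have hfpos : ∀ t : ℝ, 0 < f t := fun t => mul_pos hc (Real.exp_pos _)
  have hderiv : ∀ x ∈ Ioi (0:ℝ), HasDerivWithinAt f (-(k * f x)) (Ioi 0) x := by
    intro x _
    have h1 : HasDerivAt (fun t : ℝ => -(k * t)) (-k) x := by
      exact (((hasDerivAt_id x).const_mul k).neg).congr_deriv (by ring)
    have h2 := ((Real.hasDerivAt_exp (-(k * x))).comp x h1).const_mul c
    refine (h2.congr_deriv ?_).hasDerivWithinAt
    simp only [hfdef]
    ring
  have hinj : InjOn f (Ioi 0) := by
    intro x _ y _ hxy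
    have h1 : Real.exp (-(k * x)) = Real.exp (-(k * y)) :=
      mul_left_cancel₀ hc.ne' hxy
    have h2 : -(k * x) = -(k * y) := Real.exp_injective h1
    have := mul_left_cancel₀ hk.ne' (neg_injective h2)
    exact this
  have himg : f '' Ioi 0 = Ioo 0 c := by
    ext u
    simp only [mem_image, mem_Ioi, mem_Ioo]
    constructor
    · rintro ⟨t, ht, rfl⟩
      refine ⟨hfpos t, ?_⟩
      have : Real.exp (-(k * t)) < 1 := Real.exp_lt_one_iff.2 (by nlinarith)
      calc c * Real.exp (-(k * t)) < c * 1 := by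
            exact mul_lt_mul_of_pos_left this hc
        _ = c := mul_one c
    · rintro ⟨h1, h2⟩
      refine ⟨Real.log (c / u) / k, ?_, ?_⟩
      · have : 1 < c / u := (one_lt_div h1).2 h2
        exact div_pos (Real.log_pos this) hk
      · have hcu : 0 < c / u := div_pos hc h1
        have : -(k * (Real.log (c / u) / k)) = -Real.log (c / u) := by
          field_simp
        rw [hfdef]
        simp only
        rw [this, Real.exp_neg, Real.exp_log hcu]
        field_simp
  have hCoV := integral_image_eq_integral_abs_deriv_smul measurableSet_Ioi hderiv hinj
    (fun u => (1 - Real.exp (-u)) / (k * u))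
  rw [himg] at hCoV
  have hRHS : ∫ x in Ioi (0:ℝ), |(-(k * f x))| • ((1 - Real.exp (-(f x))) / (k * f x))
      = ∫ t in Ioi (0:ℝ), (1 - Real.exp (-(lBS / le) * (2:ℝ) ^ (-(2 * t / α)))) := by
    refine setIntegral_congr_fun measurableSet_Ioi fun t ht => ?_
    have hft := hfpos t
    have habs : |(-(k * f t))| = k * f t := by
      rw [abs_neg, abs_of_pos (mul_pos hk hft)]
    rw [smul_eq_mul, habs, mul_div_assoc']
    rw [mul_comm (k * f t) _, mul_div_assoc, div_self (mul_pos hk hft).ne', mul_one]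
    have hexp : c * (2:ℝ) ^ (-(2 * t / α)) = f t := by
      rw [hfdef]
      simp only
      rw [Real.rpow_def_of_pos (by norm_num : (0:ℝ) < 2)]
      congr 1
      rw [hkdef]
      field_simp
    rw [← hcdef, neg_mul, hexp]
  rw [hRHS] at hCoV
  rw [← hCoV]
  have hIoo : ∫ u in Ioo (0:ℝ) c, (1 - Real.exp (-u)) / (k * u)
      = k⁻¹ * ∫ u in Ioo (0:ℝ) c, (1 - Real.exp (-u)) / u := by
    rw [← integral_const_mul]
    refine setIntegral_congr_fun measurableSet_Ioo fun u hu => ?_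
    field_simp
  rw [hIoo, ← MeasureTheory.integral_Ioc_eq_integral_Ioo, keyJ hc]
  have : k⁻¹ = α / (2 * Real.log 2) := by
    rw [hkdef, inv_div]
  rw [this, hcdef]
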